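/- For a mod-m random walk with transition probabilities p_j, q_j (p_j q_j ≠ 0), the probability p*_m that the walk started at 0 reaches m before −m equals ρ_m/(1 + ρ_m), where ρ_m = (p_0 p_1 ⋯ p_{m−1})/(q_0 q_1 ⋯ q_{m−1}). -/

import Mathlib

/-- For a mod-m random walk with parameters `p j`, `q j` (periodic mod `m`,
`p j q j ≠ 0`, `p j + q j ≤ 1`), the probability `u 0` of hitting `m` before
`-m` starting from `0` (characterized by the harmonic equations with boundary
values `u (-m) = 0`, `u m = 1`) equals `ρ_m/(1 + ρ_m)` with
`ρ_m = (p_0 ⋯ p_{m-1})/(q_0 ⋯ q_{m-1})`. -/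
theorem stmt_4 (m : ℕ) (hm : 1 ≤ m) (p q : ℤ → ℝ)
    (hp : ∀ j, 0 < p j) (hq : ∀ j, 0 < q j) (hpq : ∀ j, p j + q j ≤ 1)
    (hpper : ∀ j, p (j + m) = p j) (hqper : ∀ j, q (j + m) = q j)
    (u : ℤ → ℝ) (hbot : u (-(m : ℤ)) = 0) (htop : u m = 1)
    (hrec : ∀ j : ℤ, -(m : ℤ) < j → j < m →
      u j = p j * u (j + 1) + q j * u (j - 1) + (1 - p j - q j) * u j) :
    u 0 = ((∏ j ∈ Finset.range m, p j) / (∏ j ∈ Finset.range m, q j)) /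
      (1 + (∏ j ∈ Finset.range m, p j) / (∏ j ∈ Finset.range m, q j)) := by
  set r : ℤ → ℝ := fun j => q j / p j with hr_def
  have hr : ∀ j, 0 < r j := fun j => div_pos (hq j) (hp j)
  have hrper : ∀ j, r (j + m) = r j := fun j => by
    simp only [hr_def, hpper j, hqper j]
  -- shift by one invariance of the product of m consecutive ratios
  have key : ∀ a : ℤ, ∏ i ∈ Finset.range m, r (a + 1 + i)
      = ∏ i ∈ Finset.range m, r (a + i) := by
    intro a
    obtain ⟨n, rfl⟩ : ∃ n, m = n + 1 := ⟨m - 1, (Nat.succ_pred_eq_of_pos hm).symm⟩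
    rw [Finset.prod_range_succ, Finset.prod_range_succ']
    have h1 : r (a + 1 + (n : ℤ)) = r a := by
      have h := hrper a
      rw [← h]; congr 1; push_cast; ring
    rw [h1]
    have h2 : r (a + ((0 : ℕ) : ℤ)) = r a := by norm_num
    rw [h2]
    congr 1
    apply Finset.prod_congr rfl
    intro i _
    congr 1
    push_cast; ring
  have shiftAll : ∀ a : ℤ, ∏ i ∈ Finset.range m, r (a + i)
      = ∏ i ∈ Finset.range m, r (i : ℤ) := by
    intro a
    induction a using Int.induction_on with
    | zero => simp
    | succ k ih =>
      have hk := key (k : ℤ)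
      rw [show ((k : ℤ) + 1) = (k : ℤ) + 1 from rfl]
      rw [← ih, ← hk]
    | pred k ih =>
      have hk := key (-(k : ℤ) - 1)
      rw [← hk] at *
      rw [← ih]
      apply Finset.prod_congr rfl
      intro i _
      congr 1
      ring
  set ρi : ℝ := ∏ i ∈ Finset.range m, r (i : ℤ) with hρi_def
  have hρipos : 0 < ρi := Finset.prod_pos fun i _ => hr _
  -- differences
  set D : ℕ → ℝ := fun n => u (-(m : ℤ) + n + 1) - u (-(m : ℤ) + n) with hD_def
  have hstep : ∀ n : ℕ, n + 1 < 2 * m →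
      D (n + 1) = r (-(m : ℤ) + n + 1) * D n := by
    intro n hn
    set j : ℤ := -(m : ℤ) + n + 1 with hj
    have hj1 : -(m : ℤ) < j := by omega
    have hj2 : j < m := by
      have : (n : ℤ) + 1 < 2 * m := by exact_mod_cast hn
      omega
    have h := hrec j hj1 hj2
    have hDn1 : D (n + 1) = u (j + 1) - u j := by
      simp only [hD_def, hj]; push_cast; ring_nf
    have hDn : D n = u j - u (j - 1) := by
      simp only [hD_def, hj]; push_cast; ring_nf
    rw [hDn1, hDn, hr_def]
    rw [div_mul_eq_mul_div, eq_div_iff (ne_of_gt (hp j))]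
    linear_combination -h
  -- closed form
  set P : ℕ → ℝ := fun n => ∏ i ∈ Finset.range n, r (-(m : ℤ) + 1 + i) with hP_def
  have hPpos : ∀ n, 0 < P n := fun n => Finset.prod_pos fun i _ => hr _
  have hclosed : ∀ n, n < 2 * m → D n = D 0 * P n := by
    intro n
    induction n with
    | zero => intro _; simp [hP_def]
    | succ k ih =>
      intro hk
      have hk' : k < 2 * m := by omega
      rw [hstep k hk, ih hk']
      simp only [hP_def, Finset.prod_range_succ]
      have : r (-(m : ℤ) + 1 + (k : ℤ)) = r (-(m : ℤ) + k + 1) := by ring_nf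
      rw [this]; ring
  -- telescoping sum
  have htel : ∀ k : ℕ, ∑ n ∈ Finset.range k, D n = u (-(m : ℤ) + k) - u (-(m : ℤ)) := by
    intro k
    induction k with
    | zero => simp
    | succ k ih =>
      rw [Finset.sum_range_succ, ih]
      simp only [hD_def]
      push_cast; ring_nf
  set S1 : ℝ := ∑ n ∈ Finset.range m, P n with hS1_def
  set S2 : ℝ := ∑ n ∈ Finset.range (2 * m), P n with hS2_def
  have hS1pos : 0 < S1 := Finset.sum_pos (fun n _ => hPpos n) (Finset.nonempty_range_iff.mpr (by omega))
  have hu0 : u 0 = D 0 * S1 := by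
    have h1 := htel m
    have : (-(m : ℤ) + (m : ℤ)) = 0 := by ring
    rw [this, hbot, sub_zero] at h1
    rw [← h1, hS1_def, Finset.mul_sum]
    apply Finset.sum_congr rfl
    intro n hn
    exact hclosed n (by have := Finset.mem_range.mp hn; omega)
  have hone : 1 = D 0 * S2 := by
    have h1 := htel (2 * m)
    have hc : (-(m : ℤ) + ((2 * m : ℕ) : ℤ)) = (m : ℤ) := by push_cast; ring
    rw [hc, hbot, sub_zero, htop] at h1
    rw [← h1, hS2_def, Finset.mul_sum]
    apply Finset.sum_congr rfl
    intro n hn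
    exact hclosed n (Finset.mem_range.mp hn)
  -- periodicity of P
  have hPshift : ∀ n, P (n + m) = P n * ρi := by
    intro n
    simp only [hP_def, Finset.prod_range_add]
    congr 1
    rw [← shiftAll (-(m : ℤ) + 1 + n)]
    apply Finset.prod_congr rfl
    intro i _
    congr 1
    push_cast; ring
  have hS2eq : S2 = S1 + ρi * S1 := by
    rw [hS2_def, two_mul, Finset.sum_range_add, hS1_def]
    congr 1
    rw [Finset.mul_sum]
    apply Finset.sum_congr rfl
    intro n _
    rw [show m + n = n + m from by omega, hPshift n]; ring
  -- ρi = Qq / Pp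
  have hρi_eq : ρi = (∏ j ∈ Finset.range m, q (j : ℤ)) / (∏ j ∈ Finset.range m, p (j : ℤ)) := by
    rw [hρi_def, hr_def]
    exact Finset.prod_div_distrib _ _
  have hPp : 0 < ∏ j ∈ Finset.range m, p (j : ℤ) := Finset.prod_pos fun i _ => hp _
  have hQq : 0 < ∏ j ∈ Finset.range m, q (j : ℤ) := Finset.prod_pos fun i _ => hq _
  have hS2pos : 0 < S2 := by rw [hS2eq]; positivity
  have hD0 : D 0 = 1 / S2 := by
    field_simp at hone ⊢
    linarith [hone]
  rw [hu0, hD0, hS2eq, hρi_eq]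
  field_simp
  ring
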